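/- Let q be a power of a prime and let n be a positive integer with gcd(n,q) = 1. If there exists a positive integer ℓ such that q^ℓ ≡ −1 (mod n), then every monic irreducible divisor of x^n − 1 in GF(q)[x] is self-reciprocal. -/

import Mathlib

open Polynomial

/-- A polynomial `f` over a field (with `f 0 ≠ 0`) is self-reciprocal if it equals its
reciprocal `f*(x) = f(0)⁻¹ · x^{deg f} · f(1/x)`. -/
def SelfReciprocal {F : Type*} [Field F] (f : Polynomial F) : Prop :=
  (f.coeff 0)⁻¹ • f.reverse = f

/-- If `q^ℓ ≡ −1 (mod n)` for some positive `ℓ`, then every monic irreducible divisor of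
`x^n − 1` over `GF(q)` is self-reciprocal. -/
theorem all_irreducible_divisors_selfReciprocal (q n : ℕ) (hq : IsPrimePow q)
    (F : Type) [Field F] [Fintype F] (hF : Fintype.card F = q)
    (hn : 0 < n) (hgcd : Nat.gcd n q = 1)
    (ℓ : ℕ) (hℓ : 0 < ℓ) (hcong : (q : ZMod n) ^ ℓ = -1) :
    ∀ g : Polynomial F, g.Monic → Irreducible g → g ∣ X ^ n - 1 → SelfReciprocal g := by
  intro g hmonic hirr hdvd
  -- g(0) ≠ 0
  have hg0 : g.coeff 0 ≠ 0 := by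
    intro h
    have hXdvd : (X : F[X]) ∣ X ^ n - 1 := (X_dvd_iff.2 h).trans hdvd
    rw [X_dvd_iff] at hXdvd
    rw [coeff_sub, coeff_X_pow, if_neg (Ne.symm hn.ne')] at hXdvd
    simp at hXdvd
  -- the quotient field R = F[X]/(g)
  let I : Ideal F[X] := Ideal.span {g}
  haveI hmax : I.IsMaximal := PrincipalIdealRing.isMaximal_of_irreducible hirr
  letI : Field (F[X] ⧸ I) := Ideal.Quotient.field I
  set y : F[X] ⧸ I := Ideal.Quotient.mk I X with hy
  have key : ∀ h : F[X], aeval y h = 0 ↔ g ∣ h := by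
    intro h
    have : aeval y h = Ideal.Quotient.mk I h := by
      have := Polynomial.aeval_algHom_apply (Ideal.Quotient.mkₐ F I) X h
      simpa using this
    rw [this, Ideal.Quotient.eq_zero_iff_mem, Ideal.mem_span_singleton]
  have hyg : aeval y g = 0 := (key g).2 dvd_rfl
  have hyn : y ^ n = 1 := by
    have := (key (X ^ n - 1)).2 hdvd
    simp only [map_sub, map_pow, aeval_X, map_one, sub_eq_zero] at this
    exact this
  set Q := q ^ ℓ with hQdef
  -- expand over a finite field
  have hexp : ∀ m (f : F[X]), expand F (q ^ m) f = f ^ (q ^ m) := by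
    intro m
    induction m with
    | zero => simp
    | succ m ih =>
      intro f
      have hcard : expand F q f = f ^ q := by
        have := FiniteField.expand_card f
        rwa [hF] at this
      rw [pow_succ, ← expand_expand, hcard, ih, ← pow_mul, mul_comm]
  have hQroot : aeval (y ^ Q) g = 0 := by
    rw [← expand_aeval Q g y, hQdef, hexp ℓ g, map_pow, hyg, zero_pow (pow_ne_zero ℓ hq.pos.ne')]
  -- y ^ Q is the inverse of y
  haveI : NeZero n := ⟨hn.ne'⟩
  have hdvdQ : n ∣ Q + 1 := by
    have : ((Q + 1 : ℕ) : ZMod n) = 0 := by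
      rw [hQdef]
      push_cast
      rw [hcong]
      ring
    exact (ZMod.natCast_eq_zero_iff _ _).1 this
  obtain ⟨k, hk⟩ := hdvdQ
  have hinv1 : y ^ Q * y = 1 := by
    rw [← pow_succ, hk, pow_mul, hyn, one_pow]
  have hinv2 : y * y ^ Q = 1 := by rw [mul_comm]; exact hinv1
  letI : Invertible (y ^ Q) := ⟨y, hinv2, hinv1⟩
  have hrev : aeval y (reverse g) = 0 := by
    have := (eval₂_reverse_eq_zero_iff (algebraMap F (F[X] ⧸ I)) (y ^ Q) g).2
      (by rw [← aeval_def]; exact hQroot)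
    rw [← aeval_def] at this
    convert this using 2
    rfl
  have hgdvdrev : g ∣ reverse g := (key (reverse g)).1 hrev
  have hdeg : (reverse g).natDegree ≤ g.natDegree := reverse_natDegree_le g
  have heq : reverse g = C (reverse g).leadingCoeff * g :=
    eq_leadingCoeff_mul_of_monic_of_dvd_of_natDegree_le hmonic hgdvdrev hdeg
  have hlead : (reverse g).leadingCoeff = g.coeff 0 := by
    rw [reverse_leadingCoeff, trailingCoeff, natTrailingDegree_eq_zero.2 (Or.inr hg0)]
  rw [SelfReciprocal, heq, hlead, smul_eq_C_mul, ← mul_assoc, ← C_mul,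
    inv_mul_cancel₀ hg0, C_1, one_mul]
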